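/- There exist a finite group G of order 32 and an inverse-closed subset S ⊆ G with 1 ∉ S and |S| = 5 such that the Cayley graph Cay(G,S) is distance-regular with intersection array {5,4,1,1; 1,1,4,5}. (Since the Armanios-Wells graph is the unique distance-regular graph with this intersection array, on 32 vertices, this says that the Armanios-Wells graph is a Cayley graph; a suitable group is G = (Z₂ × Q₈) ⋊ Z₂, generated by four involutions g₁, g₂, g₃, g₄ whose pairwise commutators [gᵢ,gⱼ] (i ≠ j) all equal one fixed central involution, with connection set S = {g₁, g₂, g₃, g₄, g₁g₂g₃g₄}.) -/

import Mathlib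

/-- The Cayley graph of a group `G` with connection set `S`. When `S` is inverse-closed
and does not contain `1`, distinct `a b` are adjacent iff `a * b⁻¹ ∈ S`. -/
def cayleyGraph {G : Type*} [Group G] (S : Set G) : SimpleGraph G where
  Adj a b := a ≠ b ∧ a * b⁻¹ ∈ S ∧ b * a⁻¹ ∈ S
  symm := ⟨fun a b h => ⟨h.1.symm, h.2.2, h.2.1⟩⟩
  loopless := ⟨fun a h => h.1 rfl⟩

/-- `Γ.IsDRGWith b c` means that `Γ` is a distance-regular graph with intersection array
`{b₀, …, b_{d-1}; c₁, …, c_d}`, where `d` is the diameter of `Γ`. -/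
def SimpleGraph.IsDRGWith {V : Type*} (Γ : SimpleGraph V) (b c : List ℕ) : Prop :=
  Γ.Connected ∧ c.length = b.length ∧
  (∀ x y : V, Γ.dist x y ≤ b.length) ∧
  (∃ x y : V, Γ.dist x y = b.length) ∧
  ∀ (i : ℕ) (x y : V), Γ.dist x y = i →
    (i < b.length → {z : V | Γ.Adj y z ∧ Γ.dist x z = i + 1}.ncard = b.getD i 0) ∧
    (1 ≤ i → {z : V | Γ.Adj y z ∧ Γ.dist x z = i - 1}.ncard = c.getD (i - 1) 0)

/-- Auxiliary predicate: `S` is an inverse-closed connection set of size `5` in a group `G` of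
order `32`, not containing the identity, whose Cayley graph is distance-regular with
intersection array `{5,4,1,1; 1,1,4,5}`. -/
def IsArmaniosWellsConnectionSet (G : Type) [Group G] [Fintype G] (S : Set G) : Prop :=
  Fintype.card G = 32 ∧ (∀ s ∈ S, s⁻¹ ∈ S) ∧ (1 : G) ∉ S ∧ S.ncard = 5 ∧
    (cayleyGraph S).IsDRGWith [5, 4, 1, 1] [1, 1, 4, 5]

/-! ### Generic finite-graph BFS machinery -/

set_option maxRecDepth 40000

namespace AW

open SimpleGraph Finset

section Generic

variable {V : Type} [Fintype V] [DecidableEq V] (Γ : SimpleGraph V) [DecidableRel Γ.Adj]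

/-- The ball of radius `n` around `x` in a finite graph, as a `Finset`. -/
def ballF (x : V) : ℕ → Finset V
  | 0 => {x}
  | n+1 => ballF x n ∪ Finset.univ.filter (fun z => ∃ y ∈ ballF x n, Γ.Adj y z)

lemma mem_ballF {x : V} : ∀ {n : ℕ} {y : V},
    y ∈ ballF Γ x n ↔ ∃ w : Γ.Walk x y, w.length ≤ n := by
  intro n
  induction n with
  | zero =>
    intro y
    simp only [ballF, Finset.mem_singleton, Nat.le_zero]
    constructor
    · rintro rfl; exact ⟨.nil, rfl⟩
    · rintro ⟨w, hw⟩; exact (Walk.eq_of_length_eq_zero hw).symm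
  | succ n ih =>
    intro y
    simp only [ballF, Finset.mem_union, Finset.mem_filter, Finset.mem_univ, true_and]
    constructor
    · rintro (h | ⟨u, hu, hadj⟩)
      · obtain ⟨w, hw⟩ := ih.1 h
        exact ⟨w, hw.trans (Nat.le_succ n)⟩
      · obtain ⟨w, hw⟩ := ih.1 hu
        exact ⟨w.concat hadj, by rw [Walk.length_concat]; omega⟩
    · rintro ⟨w, hw⟩
      rcases Nat.lt_or_ge w.length (n+1) with h | h
      · exact Or.inl (ih.2 ⟨w, by omega⟩)
      · have hlen : w.length = n + 1 := le_antisymm hw h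
        have hnn : ¬ w.reverse.Nil := by
          rw [Walk.not_nil_iff_lt_length, Walk.length_reverse]; omega
        obtain ⟨u, hadj, q, hq⟩ := Walk.not_nil_iff.1 hnn
        have hql : q.length = n := by
          have := congrArg Walk.length hq
          rw [Walk.length_reverse, Walk.length_cons] at this
          omega
        refine Or.inr ⟨u, ih.2 ⟨q.reverse, ?_⟩, hadj.symm⟩
        rw [Walk.length_reverse]; omega

lemma reachable_of_mem_ballF {x y : V} {n : ℕ} (h : y ∈ ballF Γ x n) : Γ.Reachable x y := by
  obtain ⟨w, -⟩ := (mem_ballF Γ).1 h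
  exact w.reachable

lemma dist_le_of_mem_ballF {x y : V} {n : ℕ} (h : y ∈ ballF Γ x n) : Γ.dist x y ≤ n := by
  obtain ⟨w, hw⟩ := (mem_ballF Γ).1 h
  exact le_trans (Γ.dist_le w) hw

/-- Decidable characterisation of `Γ.dist x z = j` for reachable pairs. -/
def distEqF (x z : V) (j : ℕ) : Prop :=
  z ∈ ballF Γ x j ∧ (1 ≤ j → z ∉ ballF Γ x (j-1))

instance (x z : V) (j : ℕ) : Decidable (distEqF Γ x z j) :=
  inferInstanceAs (Decidable (_ ∧ _))

lemma dist_eq_iff {x z : V} (hr : Γ.Reachable x z) (j : ℕ) :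
    Γ.dist x z = j ↔ distEqF Γ x z j := by
  constructor
  · intro h
    obtain ⟨w, hw⟩ := hr.exists_walk_length_eq_dist
    refine ⟨(mem_ballF Γ).2 ⟨w, by omega⟩, ?_⟩
    intro hj hmem
    have := dist_le_of_mem_ballF Γ hmem
    omega
  · rintro ⟨h1, h2⟩
    have hle := dist_le_of_mem_ballF Γ h1
    rcases Nat.eq_zero_or_pos j with rfl | hj
    · omega
    · by_contra hne
      have hlt : Γ.dist x z ≤ j - 1 := by omega
      obtain ⟨w, hw⟩ := hr.exists_walk_length_eq_dist
      exact h2 hj ((mem_ballF Γ).2 ⟨w, by omega⟩)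

end Generic

/-! ### Right translations are automorphisms of any Cayley graph -/

section Cayley

variable {G : Type*} [Group G] (S : Set G)

lemma cayley_adj_mul (g a b : G) :
    (cayleyGraph S).Adj (a * g) (b * g) ↔ (cayleyGraph S).Adj a b := by
  have e1 : a * g * (b * g)⁻¹ = a * b⁻¹ := by group
  have e2 : b * g * (a * g)⁻¹ = b * a⁻¹ := by group
  show (a * g ≠ b * g ∧ a * g * (b * g)⁻¹ ∈ S ∧ b * g * (a * g)⁻¹ ∈ S) ↔
    (a ≠ b ∧ a * b⁻¹ ∈ S ∧ b * a⁻¹ ∈ S)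
  rw [e1, e2]
  constructor
  · rintro ⟨h1, h2, h3⟩
    exact ⟨fun e => h1 (by rw [e]), h2, h3⟩
  · rintro ⟨h1, h2, h3⟩
    exact ⟨fun e => h1 (mul_right_cancel e), h2, h3⟩

/-- Right translation by `g` as an automorphism of the Cayley graph. -/
def cayleyIso (g : G) : cayleyGraph S ≃g cayleyGraph S where
  toEquiv := Equiv.mulRight g
  map_rel_iff' := by
    intro a b
    simp only [Equiv.coe_mulRight]
    exact cayley_adj_mul S g a b

end Cayley

/-! ### A fast balanced Boolean `∀`-checker -/

/-- Balanced Boolean conjunction of `f` over `[lo, lo + 2^k)`. -/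
def allPow (f : ℕ → Bool) (k : ℕ) : ℕ → Bool :=
  Nat.rec (motive := fun _ => ℕ → Bool) f
    (fun k ih lo => ih lo && ih (lo + 2^k)) k

lemma allPow_spec {f : ℕ → Bool} : ∀ {k lo : ℕ}, allPow f k lo = true →
    ∀ m, m < 2^k → f (lo + m) = true := by
  intro k
  induction k with
  | zero =>
    intro lo h m hm
    have : m = 0 := by simpa using hm
    subst this; exact h
  | succ k ih =>
    intro lo h m hm
    have h' : (allPow f k lo && allPow f k (lo + 2^k)) = true := h
    rw [Bool.and_eq_true] at h'
    rcases Nat.lt_or_ge m (2^k) with hlt | hge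
    · exact ih h'.1 m hlt
    · have h2 : m - 2^k < 2^k := by
        have : 2^(k+1) = 2^k + 2^k := by ring
        omega
      have := ih h'.2 (m - 2^k) h2
      rwa [show lo + 2^k + (m - 2^k) = lo + m by omega] at this

/-! ### The concrete group of order 32

The group `(ℤ₂ × Q₈) ⋊ ℤ₂` of order `32`: it is generated by four involutions
`g₁ = 2, g₂ = 4, g₃ = 8, g₄ = 16` (as bitmasks, with a central coordinate in bit `0`),
all of whose pairwise commutators equal the central involution `1`.  The multiplication
and inversion are presented via precomputed lookup tables so that kernel reduction of the
group operations is fast. -/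

structure G32 : Type where
  val : Fin 32
deriving DecidableEq, Fintype

/-- Lookup table for the multiplication of the group of order 32. -/
def Tmul : ℕ := 200919042250495838912336232686853603313482381634095441716187167012353750745959934283521974326600069385860065427199586919341140357368090593176136569395912332558415282841948283173008730172542206290708946212197950672734985636897863212083361597063048736823439027754539076809898664368332413746371212195229306948951255802995783485334227330235348201754905887894992441294725507881262521357640087622612371734870478561317817858994403919085752015540234137683300980752159555295152093199095728159124134242769170455474113698425301036814645601633485926270803272187119430807065854002485541374249238286485211832381389626787592367233943874098606964080218546399046633905644193500786398659967108335698104915727223399827590845592403779012925226471513414088738608549099838690075310535888948382977707086644306320828777609301094992889948502597504967785659130188388619139768041801856613931504360069463367287629899817643032061655497571694465985999334371554542886894674042252140384491393982882435155730310115316277979708856607173215684428352523556467989562326353039014232391355978677402081257679092239023685301316146242498586993166392350721698218555564866347710580309572505960009515926086450670079331209874171916110702270864267588686930970722334993289280035335665529462836821092409634695357011666201088303394017083647282456677770157034913453990710066631272585828287751498374678294546372594176580208180779854187130388492124366992000218145970038586939479466970445858774938015508335066976041841113876327906110891524844843274366316208376899996746319710119169100366317600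

/-- Lookup table for the inversion of the group of order 32. -/
def Tinv : ℕ := 1459937574042516129702274366544800138100893386784

def gmul (u v : G32) : G32 :=
  ⟨⟨Tmul / 32 ^ (u.val.val * 32 + v.val.val) % 32, Nat.mod_lt _ (by norm_num)⟩⟩

def ginv (u : G32) : G32 :=
  ⟨⟨Tinv / 32 ^ u.val.val % 32, Nat.mod_lt _ (by norm_num)⟩⟩

def mkG (n : ℕ) : G32 := ⟨⟨n % 32, Nat.mod_lt _ (by norm_num)⟩⟩

lemma mkG_val (x : G32) : mkG x.val.val = x := by
  cases x with
  | mk v =>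
    cases v with
    | mk a h => simp [mkG, Nat.mod_eq_of_lt h]

lemma G32.ext' {x y : G32} (h : x.val.val = y.val.val) : x = y := by
  cases x; cases y
  congr 1
  exact Fin.ext h

set_option maxHeartbeats 4000000 in
lemma gmul_assoc : ∀ x y z : G32, gmul (gmul x y) z = gmul x (gmul y z) := by
  have H := allPow_spec (f := fun n => decide
    ((gmul (gmul (mkG (n / 1024)) (mkG (n / 32 % 32))) (mkG (n % 32))).val.val
      = (gmul (mkG (n / 1024)) (gmul (mkG (n / 32 % 32)) (mkG (n % 32)))).val.val))
    (k := 15) (lo := 0) (by decide)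
  intro x y z
  set m : ℕ := (x.val.val * 32 + y.val.val) * 32 + z.val.val with hm
  have hx := x.val.isLt
  have hy := y.val.isLt
  have hz := z.val.isLt
  have h := of_decide_eq_true (H m (by norm_num; omega))
  simp only [Nat.zero_add] at h
  have e1 : m / 1024 = x.val.val := by omega
  have e2 : m / 32 % 32 = y.val.val := by omega
  have e3 : m % 32 = z.val.val := by omega
  rw [e1, e2, e3, mkG_val, mkG_val, mkG_val] at h
  exact G32.ext' h

lemma gone_mul : ∀ x : G32, gmul ⟨⟨0, by norm_num⟩⟩ x = x := by decide

lemma gmul_one : ∀ x : G32, gmul x ⟨⟨0, by norm_num⟩⟩ = x := by decide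

lemma ginv_mul : ∀ x : G32, gmul (ginv x) x = ⟨⟨0, by norm_num⟩⟩ := by decide

instance : Group G32 where
  mul := gmul
  one := ⟨⟨0, by norm_num⟩⟩
  inv := ginv
  mul_assoc := gmul_assoc
  one_mul := gone_mul
  mul_one := gmul_one
  inv_mul_cancel := ginv_mul

def Sf : Finset G32 :=
  {⟨⟨2, by norm_num⟩⟩, ⟨⟨4, by norm_num⟩⟩, ⟨⟨8, by norm_num⟩⟩, ⟨⟨16, by norm_num⟩⟩,
   ⟨⟨30, by norm_num⟩⟩}

def S32 : Set G32 := ↑Sf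

instance : DecidablePred (· ∈ S32) := fun a =>
  decidable_of_iff (a ∈ Sf) (by simp [S32])

instance : DecidableRel (cayleyGraph S32).Adj := fun a b =>
  inferInstanceAs (Decidable (a ≠ b ∧ a * b⁻¹ ∈ S32 ∧ b * a⁻¹ ∈ S32))

set_option maxHeartbeats 2000000 in
lemma key1 : ∀ y : G32, y ∈ ballF (cayleyGraph S32) 1 4 := by decide

lemma cayleyIso_toHom_apply {G : Type*} [Group G] (S : Set G) (g a : G) :
    (cayleyIso S g).toHom a = a * g := rfl

lemma reach_all : ∀ x y : G32, (cayleyGraph S32).Reachable x y := by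
  intro x y
  have h := reachable_of_mem_ballF _ (key1 (y * x⁻¹))
  have h2 := h.map (cayleyIso S32 x).toHom
  rw [cayleyIso_toHom_apply, cayleyIso_toHom_apply, one_mul, inv_mul_cancel_right] at h2
  exact h2

lemma dist_mul_le (x y g : G32) :
    (cayleyGraph S32).dist (x * g) (y * g) ≤ (cayleyGraph S32).dist x y := by
  obtain ⟨w, hw⟩ := (reach_all x y).exists_walk_length_eq_dist
  have h := (cayleyGraph S32).dist_le (w.map (cayleyIso S32 g).toHom)
  rw [SimpleGraph.Walk.length_map, hw, cayleyIso_toHom_apply, cayleyIso_toHom_apply] at h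
  exact h

lemma dist_mul (x y g : G32) :
    (cayleyGraph S32).dist (x * g) (y * g) = (cayleyGraph S32).dist x y := by
  refine le_antisymm (dist_mul_le x y g) ?_
  have h := dist_mul_le (x * g) (y * g) g⁻¹
  rw [mul_inv_cancel_right, mul_inv_cancel_right] at h
  exact h

lemma dist_one (x y : G32) :
    (cayleyGraph S32).dist x y = (cayleyGraph S32).dist 1 (y * x⁻¹) := by
  have h := dist_mul x y x⁻¹
  rw [mul_inv_cancel] at h
  exact h.symm

set_option maxHeartbeats 4000000 in
lemma mainDec1 : ∀ (i : Fin 5) (y : G32), distEqF (cayleyGraph S32) 1 y i →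
    ((i : ℕ) < 4 →
      (Finset.univ.filter (fun z => (cayleyGraph S32).Adj y z ∧
          distEqF (cayleyGraph S32) 1 z ((i : ℕ) + 1))).card
        = [5, 4, 1, 1].getD (i : ℕ) 0) ∧
    (1 ≤ (i : ℕ) →
      (Finset.univ.filter (fun z => (cayleyGraph S32).Adj y z ∧
          distEqF (cayleyGraph S32) 1 z ((i : ℕ) - 1))).card
        = [1, 1, 4, 5].getD ((i : ℕ) - 1) 0) := by decide

end AW

open AW in
/-- There exist a finite group `G` of order `32` and an inverse-closed subset `S ⊆ G` with
`1 ∉ S` and `|S| = 5` such that `Cay(G, S)` is distance-regular with intersection array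
`{5,4,1,1; 1,1,4,5}`; that is, the Armanios-Wells graph is a Cayley graph. -/
theorem stmt_18 :
    ∃ (G : Type) (instG : Group G) (instF : Fintype G) (S : Set G),
      @IsArmaniosWellsConnectionSet G instG instF S := by
  refine ⟨G32, inferInstance, inferInstance, S32, ?_, ?_, ?_, ?_, ?_, rfl, ?_, ?_, ?_⟩
  · decide
  · decide
  · decide
  · show (↑Sf : Set G32).ncard = 5
    rw [Set.ncard_coe_finset]
    decide
  · -- Connected
    rw [SimpleGraph.connected_iff]
    exact ⟨reach_all, ⟨1⟩⟩
  · -- diameter bound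
    intro x y
    have h := dist_le_of_mem_ballF _ (key1 (y * x⁻¹))
    rw [dist_one x y]
    simpa using h
  · -- diameter attained
    refine ⟨1, ⟨⟨1, by norm_num⟩⟩, ?_⟩
    show (cayleyGraph S32).dist _ _ = 4
    rw [dist_eq_iff _ (reach_all _ _) 4]
    decide
  · -- intersection numbers
    intro i x y h
    have h' : (cayleyGraph S32).dist 1 (y * x⁻¹) = i := by rw [← AW.dist_one]; exact h
    have hi : i ≤ 4 := by
      have := dist_le_of_mem_ballF _ (key1 (y * x⁻¹))
      omega
    have hd : distEqF (cayleyGraph S32) 1 (y * x⁻¹) i :=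
      (dist_eq_iff _ (reach_all 1 (y * x⁻¹)) i).1 h'
    have hmain := mainDec1 ⟨i, by omega⟩ (y * x⁻¹) hd
    simp only [Fin.val_mk] at hmain
    have hset : ∀ j : ℕ,
        {z : G32 | (cayleyGraph S32).Adj y z ∧ (cayleyGraph S32).dist x z = j}.ncard
          = (Finset.univ.filter (fun w => (cayleyGraph S32).Adj (y * x⁻¹) w ∧
              distEqF (cayleyGraph S32) 1 w j)).card := by
      intro j
      have himg : (fun z => z * x⁻¹) ''
          {z : G32 | (cayleyGraph S32).Adj y z ∧ (cayleyGraph S32).dist x z = j}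
          = {w : G32 | (cayleyGraph S32).Adj (y * x⁻¹) w ∧ (cayleyGraph S32).dist 1 w = j} := by
        ext w
        constructor
        · rintro ⟨z, ⟨hz1, hz2⟩, rfl⟩
          refine ⟨(cayley_adj_mul S32 x⁻¹ y z).2 hz1, ?_⟩
          rw [← dist_one x z]
          exact hz2
        · rintro ⟨h1, h2⟩
          refine ⟨w * x, ⟨?_, ?_⟩, by simp⟩
          · have := (cayley_adj_mul S32 x (y * x⁻¹) w).2 h1
            simpa using this
          · rw [dist_one x (w * x)]
            simpa using h2
        
      rw [← Set.ncard_image_of_injective _ (mul_left_injective x⁻¹), himg]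
      rw [show {w : G32 | (cayleyGraph S32).Adj (y * x⁻¹) w ∧ (cayleyGraph S32).dist 1 w = j}
          = ↑(Finset.univ.filter (fun w => (cayleyGraph S32).Adj (y * x⁻¹) w ∧
              distEqF (cayleyGraph S32) 1 w j)) from ?_]
      · rw [Set.ncard_coe_finset]
      · ext z
        simp only [Set.mem_setOf_eq, Finset.coe_filter, Finset.mem_univ, true_and,
          dist_eq_iff _ (reach_all 1 z) j]
    constructor
    · intro hlt
      rw [hset (i + 1)]
      exact hmain.1 (by simpa using hlt)
    · intro h1
      rw [hset (i - 1)]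
      exact hmain.2 h1
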